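/- Let Φ : [0,1] → ℝ be continuous and strictly convex, ρ ∈ (0,1), a ∈ (0,1). Suppose (S,Z) is a pair of random variables with S ∈ {-a, 1-a}, P(S = 1−a) = a, 0 ≤ a + ρZ ≤ 1 a.s., E[Z] = 0, and E[Z²] < E[SZ], and suppose there exists z* in the support of Z with 0 < a + ρz* < 1. Then (S,Z) does not maximize E[Φ(a+ρZ)] among all such pairs: there exists another feasible pair (S,Z') with the same marginal for S satisfying E[Φ(a+ρZ')] > E[Φ(a+ρZ)]. -/

import Mathlib

open Finset

lemma sum_pert {m : ℕ} (g : Fin m → ℝ) (i₀ : Fin m) (A B : ℝ) (h : Fin (m+1) → ℝ)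
    (h1 : ∀ i : Fin m, i ≠ i₀ → h i.castSucc = g i)
    (h2 : h i₀.castSucc = A) (h3 : h (Fin.last m) = B) :
    ∑ i, h i = ∑ i, g i - g i₀ + A + B := by
  rw [Fin.sum_univ_castSucc, h3]
  have e : ∀ i : Fin m, h i.castSucc = Function.update g i₀ A i := by
    intro i; by_cases hi : i = i₀
    · subst hi; simpa using h2
    · rw [Function.update_of_ne hi]; exact h1 i hi
  have e2 : ∑ i : Fin m, h i.castSucc = ∑ i : Fin m, Function.update g i₀ A i :=
    Finset.sum_congr rfl (fun i _ => e i)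
  have e2' : ∑ i : Fin m, Function.update g i₀ A i
      = A + ∑ i ∈ Finset.univ \ {i₀}, g i :=
    Finset.sum_update_of_mem (Finset.mem_univ i₀) g A
  have e3 : g i₀ + ∑ i ∈ Finset.univ \ {i₀}, g i = ∑ i, g i := by
    rw [Finset.sdiff_singleton_eq_erase]
    exact Finset.add_sum_erase _ g (Finset.mem_univ i₀)
  rw [e2, e2']; linarith


/-- A finitely supported joint distribution of `(S, Z)` given by atoms
`(s i, z i)` with weights `p i`, feasible for the optimization in
Theorem 2 of the paper: `S ∈ {-a, 1-a}`, `P(S = 1-a) = a`, `0 ≤ a + ρZ ≤ 1`,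
`E[Z] = 0`, and `E[Z²] ≤ E[SZ]`. -/
def Feasible (a ρ : ℝ) {m : ℕ} (s z p : Fin m → ℝ) : Prop :=
  (∀ i, 0 ≤ p i) ∧ (∑ i, p i = 1) ∧
  (∀ i, s i = -a ∨ s i = 1 - a) ∧
  (∑ i ∈ Finset.univ.filter (fun i => s i = 1 - a), p i = a) ∧
  (∀ i, 0 ≤ a + ρ * z i ∧ a + ρ * z i ≤ 1) ∧
  (∑ i, p i * z i = 0) ∧
  (∑ i, p i * (z i) ^ 2 ≤ ∑ i, p i * (s i * z i))

set_option maxHeartbeats 1000000 in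
/-- If a feasible pair has strict slack `E[Z²] < E[SZ]` and an atom with
`0 < a + ρz* < 1`, then it does not maximize `E[Φ(a + ρZ)]`: some feasible pair
does strictly better. -/
theorem stmt16 (Φ : ℝ → ℝ) (hcont : ContinuousOn Φ (Set.Icc 0 1))
    (hconv : StrictConvexOn ℝ (Set.Icc (0 : ℝ) 1) Φ)
    (a ρ : ℝ) (ha : a ∈ Set.Ioo (0 : ℝ) 1) (hρ : ρ ∈ Set.Ioo (0 : ℝ) 1)
    {m : ℕ} (s z p : Fin m → ℝ) (hfeas : Feasible a ρ s z p)
    (hstrict : ∑ i, p i * (z i) ^ 2 < ∑ i, p i * (s i * z i))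
    (hint : ∃ i, 0 < p i ∧ 0 < a + ρ * z i ∧ a + ρ * z i < 1) :
    ∃ (m' : ℕ) (s' z' p' : Fin m' → ℝ), Feasible a ρ s' z' p' ∧
      ∑ i, p i * Φ (a + ρ * z i) < ∑ i, p' i * Φ (a + ρ * z' i) := by
  obtain ⟨i₀, hp0, hx0, hx1⟩ := hint
  obtain ⟨hpnn, hpsum, hs, hfil, hbd, hEZ, hEZ2⟩ := hfeas
  have hρ0 : 0 < ρ := hρ.1
  -- choose δ
  obtain ⟨δ, hδ0, hρδx, hρδx', hδ2⟩ :
      ∃ δ : ℝ, 0 < δ ∧ ρ * δ ≤ a + ρ * z i₀ ∧ ρ * δ ≤ 1 - (a + ρ * z i₀) ∧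
        p i₀ * δ ^ 2 ≤ ∑ i, p i * (s i * z i) - ∑ i, p i * (z i) ^ 2 := by
    set x : ℝ := a + ρ * z i₀ with hxdef
    set G : ℝ := ∑ i, p i * (s i * z i) - ∑ i, p i * (z i) ^ 2 with hGdef
    have hG : 0 < G := by simp only [hGdef]; linarith
    refine ⟨min (min x (1 - x) / ρ) (Real.sqrt (G / p i₀)), ?_, ?_, ?_, ?_⟩
    · exact lt_min (div_pos (lt_min hx0 (by linarith)) hρ0)
        (Real.sqrt_pos.mpr (div_pos hG hp0))
    · have h1 : min (min x (1 - x) / ρ) (Real.sqrt (G / p i₀)) ≤ min x (1 - x) / ρ :=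
        min_le_left _ _
      have h2 : min x (1 - x) ≤ x := min_le_left _ _
      calc ρ * min (min x (1 - x) / ρ) (Real.sqrt (G / p i₀))
          ≤ ρ * (min x (1 - x) / ρ) := by nlinarith
        _ = min x (1 - x) := by field_simp
        _ ≤ x := h2
    · have h1 : min (min x (1 - x) / ρ) (Real.sqrt (G / p i₀)) ≤ min x (1 - x) / ρ :=
        min_le_left _ _
      have h2 : min x (1 - x) ≤ 1 - x := min_le_right _ _
      calc ρ * min (min x (1 - x) / ρ) (Real.sqrt (G / p i₀))
          ≤ ρ * (min x (1 - x) / ρ) := by nlinarith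
        _ = min x (1 - x) := by field_simp
        _ ≤ 1 - x := h2
    · have h1 : min (min x (1 - x) / ρ) (Real.sqrt (G / p i₀)) ≤ Real.sqrt (G / p i₀) :=
        min_le_right _ _
      have h0 : 0 ≤ min (min x (1 - x) / ρ) (Real.sqrt (G / p i₀)) :=
        le_min (le_of_lt (div_pos (lt_min hx0 (by linarith)) hρ0)) (Real.sqrt_nonneg _)
      have h2 : (min (min x (1 - x) / ρ) (Real.sqrt (G / p i₀))) ^ 2 ≤ G / p i₀ := by
        have := Real.sq_sqrt (le_of_lt (div_pos hG hp0))
        nlinarith [Real.sqrt_nonneg (G / p i₀)]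
      calc p i₀ * (min (min x (1 - x) / ρ) (Real.sqrt (G / p i₀))) ^ 2
          ≤ p i₀ * (G / p i₀) := by nlinarith
        _ = G := by field_simp
  -- the perturbed distribution
  refine ⟨m + 1, Fin.snoc s (s i₀),
    Fin.snoc (Function.update z i₀ (z i₀ + δ)) (z i₀ - δ),
    Fin.snoc (Function.update p i₀ (p i₀ / 2)) (p i₀ / 2), ?_⟩
  set p' : Fin (m+1) → ℝ := Fin.snoc (Function.update p i₀ (p i₀ / 2)) (p i₀ / 2) with hp'
  set z' : Fin (m+1) → ℝ := Fin.snoc (Function.update z i₀ (z i₀ + δ)) (z i₀ - δ) with hz'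
  set s' : Fin (m+1) → ℝ := Fin.snoc s (s i₀) with hs'
  have hp'c : ∀ i : Fin m, i ≠ i₀ → p' i.castSucc = p i := by
    intro i hi; rw [hp', Fin.snoc_castSucc, Function.update_of_ne hi]
  have hp'i : p' i₀.castSucc = p i₀ / 2 := by
    rw [hp', Fin.snoc_castSucc, Function.update_self]
  have hp'l : p' (Fin.last m) = p i₀ / 2 := by rw [hp', Fin.snoc_last]
  have hz'c : ∀ i : Fin m, i ≠ i₀ → z' i.castSucc = z i := by
    intro i hi; rw [hz', Fin.snoc_castSucc, Function.update_of_ne hi]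
  have hz'i : z' i₀.castSucc = z i₀ + δ := by
    rw [hz', Fin.snoc_castSucc, Function.update_self]
  have hz'l : z' (Fin.last m) = z i₀ - δ := by rw [hz', Fin.snoc_last]
  have hs'c : ∀ i : Fin m, s' i.castSucc = s i := by
    intro i; rw [hs', Fin.snoc_castSucc]
  have hs'l : s' (Fin.last m) = s i₀ := by rw [hs', Fin.snoc_last]
  clear_value p' z' s'
  have hρδpos : 0 < ρ * δ := mul_pos hρ0 hδ0
  -- sums
  have Sp : ∑ i, p' i = ∑ i, p i - p i₀ + p i₀ / 2 + p i₀ / 2 :=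
    sum_pert p i₀ _ _ p' (fun i hi => hp'c i hi) hp'i hp'l
  have Spz : ∑ i, p' i * z' i
      = ∑ i, p i * z i - p i₀ * z i₀ + p i₀ / 2 * (z i₀ + δ) + p i₀ / 2 * (z i₀ - δ) :=
    sum_pert (fun i => p i * z i) i₀ _ _ (fun i => p' i * z' i)
      (fun i hi => by simp only [hp'c i hi, hz'c i hi]) (by simp only [hp'i, hz'i])
      (by simp only [hp'l, hz'l])
  have Spz2 : ∑ i, p' i * (z' i) ^ 2
      = ∑ i, p i * (z i) ^ 2 - p i₀ * (z i₀) ^ 2 + p i₀ / 2 * (z i₀ + δ) ^ 2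
        + p i₀ / 2 * (z i₀ - δ) ^ 2 :=
    sum_pert (fun i => p i * (z i) ^ 2) i₀ _ _ (fun i => p' i * (z' i) ^ 2)
      (fun i hi => by simp only [hp'c i hi, hz'c i hi]) (by simp only [hp'i, hz'i])
      (by simp only [hp'l, hz'l])
  have Spsz : ∑ i, p' i * (s' i * z' i)
      = ∑ i, p i * (s i * z i) - p i₀ * (s i₀ * z i₀) + p i₀ / 2 * (s i₀ * (z i₀ + δ))
        + p i₀ / 2 * (s i₀ * (z i₀ - δ)) :=
    sum_pert (fun i => p i * (s i * z i)) i₀ _ _ (fun i => p' i * (s' i * z' i))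
      (fun i hi => by simp only [hp'c i hi, hz'c i hi, hs'c i])
      (by simp only [hp'i, hz'i, hs'c i₀]) (by simp only [hp'l, hz'l, hs'l])
  have SpΦ : ∑ i, p' i * Φ (a + ρ * z' i)
      = ∑ i, p i * Φ (a + ρ * z i) - p i₀ * Φ (a + ρ * z i₀)
        + p i₀ / 2 * Φ (a + ρ * (z i₀ + δ)) + p i₀ / 2 * Φ (a + ρ * (z i₀ - δ)) :=
    sum_pert (fun i => p i * Φ (a + ρ * z i)) i₀ _ _ (fun i => p' i * Φ (a + ρ * z' i))
      (fun i hi => by simp only [hp'c i hi, hz'c i hi]) (by simp only [hp'i, hz'i])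
      (by simp only [hp'l, hz'l])
  refine ⟨⟨?_, ?_, ?_, ?_, ?_, ?_, ?_⟩, ?_⟩
  · -- nonneg
    intro i
    induction i using Fin.lastCases with
    | last => rw [hp'l]; linarith
    | cast i =>
      by_cases hi : i = i₀
      · subst hi; rw [hp'i]; linarith
      · rw [hp'c i hi]; exact hpnn i
  · rw [Sp, hpsum]; ring
  · -- s values
    intro i
    induction i using Fin.lastCases with
    | last => rw [hs'l]; exact hs i₀
    | cast i => rw [hs'c i]; exact hs i
  · -- filter sum
    rw [Finset.sum_filter]
    have key := sum_pert (fun i => if s i = 1 - a then p i else 0) i₀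
      (if s i₀ = 1 - a then p i₀ / 2 else 0) (if s i₀ = 1 - a then p i₀ / 2 else 0)
      (fun i => if s' i = 1 - a then p' i else 0)
      (fun i hi => by simp only [hs'c i, hp'c i hi])
      (by simp only [hs'c i₀, hp'i]) (by simp only [hs'l, hp'l])
    rw [key]
    have hg : ∑ i, (if s i = 1 - a then p i else 0) = a := by
      rw [← Finset.sum_filter]; exact hfil
    rw [hg]
    by_cases hc : s i₀ = 1 - a <;> simp [hc] <;> ring
  · -- bounds
    intro i
    induction i using Fin.lastCases with
    | last =>
      rw [hz'l]
      have e : a + ρ * (z i₀ - δ) = a + ρ * z i₀ - ρ * δ := by ring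
      rw [e]
      constructor
      · linarith
      · linarith
    | cast i =>
      by_cases hi : i = i₀
      · rw [hi, hz'i]
        have e : a + ρ * (z i₀ + δ) = a + ρ * z i₀ + ρ * δ := by ring
        rw [e]
        constructor
        · linarith
        · linarith
      · rw [hz'c i hi]; exact hbd i
  · rw [Spz, hEZ]; ring
  · rw [Spz2, Spsz]; nlinarith [hδ2]
  · -- the objective strictly improves
    rw [SpΦ]
    have e1 : a + ρ * (z i₀ - δ) = a + ρ * z i₀ - ρ * δ := by ring
    have e2 : a + ρ * (z i₀ + δ) = a + ρ * z i₀ + ρ * δ := by ring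
    have hum : a + ρ * (z i₀ - δ) ∈ Set.Icc (0:ℝ) 1 := by
      rw [e1]; constructor
      · linarith
      · linarith
    have hvm : a + ρ * (z i₀ + δ) ∈ Set.Icc (0:ℝ) 1 := by
      rw [e2]; constructor
      · linarith
      · linarith
    have hne : a + ρ * (z i₀ - δ) ≠ a + ρ * (z i₀ + δ) := by
      intro h; rw [e1, e2] at h; linarith
    have hkey := hconv.2 hum hvm hne (by norm_num : (0:ℝ) < 1/2)
      (by norm_num : (0:ℝ) < 1/2) (by norm_num)
    have hmid : (1/2 : ℝ) • (a + ρ * (z i₀ - δ)) + (1/2 : ℝ) • (a + ρ * (z i₀ + δ))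
        = a + ρ * z i₀ := by
      simp only [smul_eq_mul]; ring
    rw [hmid] at hkey
    simp only [smul_eq_mul] at hkey
    linarith [mul_pos hp0 (sub_pos.mpr hkey)]
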